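/- Let m be a positive even integer and k a positive odd integer with gcd(2^k - 1, 2^m - 1) = 1 and gcd(2^k + 1, 2^m + 1) = 1. Then the polynomial f(x) = Σ_j x^{2^{k+m} - j·2^m + j - 1}, where j ranges over 1 ≤ j ≤ 2^k with j ≡ 0 or 2 mod 3, is a permutation polynomial of F_{2^{2m}}. -/

import Mathlib

lemma aux_mersenne_coprime (k n : ℕ) (h : Nat.Coprime k n) :
    Nat.Coprime (2 ^ k - 1) (2 ^ n - 1) := by
  set d := Nat.gcd (2 ^ k - 1) (2 ^ n - 1) with hd
  have h1 : d ∣ 2 ^ k - 1 := Nat.gcd_dvd_left _ _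
  have h2 : d ∣ 2 ^ n - 1 := Nat.gcd_dvd_right _ _
  have hk1 : 1 ≤ 2 ^ k := Nat.one_le_two_pow
  have hn1 : 1 ≤ 2 ^ n := Nat.one_le_two_pow
  have e1 : ((2 : ZMod d)) ^ k = 1 := by
    have : ((2 ^ k - 1 : ℕ) : ZMod d) = 0 := (ZMod.natCast_eq_zero_iff _ _).mpr h1
    push_cast [Nat.cast_sub hk1] at this
    linear_combination this
  have e2 : ((2 : ZMod d)) ^ n = 1 := by
    have : ((2 ^ n - 1 : ℕ) : ZMod d) = 0 := (ZMod.natCast_eq_zero_iff _ _).mpr h2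
    push_cast [Nat.cast_sub hn1] at this
    linear_combination this
  have o1 : orderOf (2 : ZMod d) ∣ k := orderOf_dvd_of_pow_eq_one e1
  have o2 : orderOf (2 : ZMod d) ∣ n := orderOf_dvd_of_pow_eq_one e2
  have hdvd : orderOf (2 : ZMod d) ∣ 1 := by
    have := Nat.dvd_gcd o1 o2; rwa [h.gcd_eq_one] at this
  have h21 : (2 : ZMod d) = 1 := orderOf_eq_one_iff.mp (Nat.dvd_one.mp hdvd)
  have hz : ((1 : ℕ) : ZMod d) = 0 := by
    have : (2 : ZMod d) - 1 = 0 := by rw [h21]; ring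
    calc ((1:ℕ) : ZMod d) = (2 : ZMod d) - 1 := by push_cast; ring
    _ = 0 := this
  exact Nat.dvd_one.mp ((ZMod.natCast_eq_zero_iff _ _).mp hz)

lemma aux_H {K : Type*} [Field K] (htwo : (2 : K) = 0) (z : K) (t : ℕ) :
    (z ^ 2 + z + 1) * ∑ i ∈ (Finset.range (3 * t + 2)).filter (fun i => ¬ i % 3 = 1), z ^ i
      = z ^ (3 * t + 2) + z + 1 := by
  induction t with
  | zero =>
    norm_num [Finset.sum_filter, Finset.sum_range_succ]
  | succ t ih =>
    have hs : (Finset.range (3 * (t+1) + 2)).filter (fun i => ¬ i % 3 = 1)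
        = insert (3*t+3) (insert (3*t+2) ((Finset.range (3 * t + 2)).filter (fun i => ¬ i % 3 = 1))) := by
      ext i
      simp only [Finset.mem_insert, Finset.mem_filter, Finset.mem_range]
      omega
    rw [hs, Finset.sum_insert, Finset.sum_insert]
    · rw [mul_add, mul_add, ih]
      have e1 : z ^ (3*t+3) = z ^ (3*t+2) * z := by ring
      have e2 : z ^ (3*(t+1)+2) = z ^ (3*t+2) * z^3 := by ring
      rw [e1, e2]
      linear_combination (z^(3*t+2) * (1 + z + z^2)) * htwo
    · simp only [Finset.mem_filter, Finset.mem_range]; omega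
    · simp only [Finset.mem_insert, Finset.mem_filter, Finset.mem_range]; omega

lemma aux_exp (Q A j : ℕ) (hQ : 1 ≤ Q) (h1 : 1 ≤ j) (h2 : j ≤ A) :
    A * Q - j * Q + j - 1 = (Q - 1) * (A - j) + (A - 1) := by
  have h3 : j * Q ≤ A * Q := Nat.mul_le_mul_right _ h2
  have h4 : 1 ≤ A := le_trans h1 h2
  have h5 : 1 ≤ A * Q - j * Q + j := le_trans h1 (Nat.le_add_left j _)
  zify [h1, h2, h3, hQ, h4, h5]
  ring

theorem stmt_17 (m k : ℕ) (hm : 0 < m) (hme : Even m) (hk : 0 < k) (hko : Odd k)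
    (h1 : Nat.gcd (2 ^ k - 1) (2 ^ m - 1) = 1)
    (h2 : Nat.gcd (2 ^ k + 1) (2 ^ m + 1) = 1) :
    Function.Bijective (fun x : GaloisField 2 (2 * m) =>
      ∑ j ∈ (Finset.Icc 1 (2 ^ k)).filter (fun j => j % 3 = 0 ∨ j % 3 = 2),
        x ^ (2 ^ (k + m) - j * 2 ^ m + j - 1)) := by
  classical
  haveI : Fact (Nat.Prime 2) := ⟨Nat.prime_two⟩
  set K := GaloisField 2 (2 * m) with hK
  haveI : Fintype K := Fintype.ofFinite K
  have h2m : 2 * m ≠ 0 := by omega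
  have hcard : Fintype.card K = 2 ^ (2 * m) := by
    rw [← Nat.card_eq_fintype_card]; exact GaloisField.card 2 (2*m) h2m
  have htwo : (2 : K) = 0 := by
    have := CharP.cast_eq_zero K 2; exact_mod_cast this
  have hpowcard : ∀ x : K, x ^ (2 ^ (2*m)) = x := fun x => by
    rw [← hcard]; exact FiniteField.pow_card x
  have hqq : ∀ x : K, (x ^ (2^m)) ^ (2^m) = x := fun x => by
    rw [← pow_mul, ← pow_add, show m + m = 2 * m by ring]
    exact hpowcard x
  have hfrob : ∀ x y : K, (x + y) ^ (2^m) = x ^ (2^m) + y ^ (2^m) := fun x y =>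
    add_pow_char_pow x y 2 m
  have hfrobk : ∀ x y : K, (x + y) ^ (2^k) = x ^ (2^k) + y ^ (2^k) := fun x y =>
    add_pow_char_pow x y 2 k
  -- cube root of unity
  have h3card : (3:ℕ) ∣ Fintype.card Kˣ := by
    rw [Fintype.card_units, hcard]
    have hd : (3:ℕ) ∣ 4 ^ m - 1 := by simpa using Nat.sub_dvd_pow_sub_pow 4 1 m
    have : (2:ℕ) ^ (2*m) = 4 ^ m := by rw [pow_mul]; norm_num
    rw [this]; exact hd
  haveI : Fact (Nat.Prime 3) := ⟨by norm_num⟩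
  obtain ⟨ωu, hωu⟩ := exists_prime_orderOf_dvd_card 3 h3card
  set ω : K := (ωu : K) with hωdef
  have hω3 : ω ^ 3 = 1 := by
    have h := pow_orderOf_eq_one ωu
    rw [hωu] at h
    have := congrArg (Units.val) h
    simpa [hωdef] using this
  have hωne : ω ≠ 1 := by
    intro h
    have : ωu = 1 := Units.ext (by simpa [hωdef] using h)
    rw [this] at hωu
    simp at hωu
  have hω : ω^2 + ω + 1 = 0 := by
    have hfac : (ω - 1) * (ω^2 + ω + 1) = 0 := by linear_combination hω3
    rcases mul_eq_zero.mp hfac with h | h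
    · exact absurd (sub_eq_zero.mp h) hωne
    · exact h
  -- mod 3 facts
  obtain ⟨a, ha⟩ := hko
  obtain ⟨b, hb⟩ := hme
  have h4mod : ∀ j : ℕ, (4:ℕ)^j % 3 = 1 := fun j => by
    rw [Nat.pow_mod]; norm_num
  have hk3 : ∃ c, 2^k = 3*c + 2 := by
    have hx : (2:ℕ)^k = 2 * 4^a := by
      rw [ha, pow_succ, pow_mul]; ring
    have hmod := h4mod a
    obtain ⟨t, ht⟩ : ∃ t, (4:ℕ)^a = 3*t + 1 := ⟨4^a/3, by omega⟩
    exact ⟨2*t, by rw [hx, ht]; ring⟩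
  obtain ⟨c, hc⟩ := hk3
  have hm3 : ∃ e, 2^m = 3*e + 1 := by
    have hx : (2:ℕ)^m = 4^b := by
      rw [hb, show b + b = 2*b by ring, pow_mul]; norm_num
    have hmod := h4mod b
    obtain ⟨t, ht⟩ : ∃ t, (4:ℕ)^b = 3*t + 1 := ⟨4^b/3, by omega⟩
    exact ⟨t, by rw [hx, ht]⟩
  obtain ⟨e3, he3⟩ := hm3
  have hωpow : ∀ (c r : ℕ), ω ^ (3*c + r) = ω ^ r := fun c r => by
    rw [pow_add, pow_mul, hω3, one_pow, one_mul]
  have hωq : ω ^ (2^m) = ω := by rw [he3]; simpa using hωpow e3 1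
  have hωk : ω ^ (2^k) = ω^2 := by rw [hc]; exact hωpow c 2
  have hω2k : (ω^2) ^ (2^k) = ω := by
    rw [← pow_mul, show 2 * 2^k = 3 * (2*c+1) + 1 by omega, hωpow, pow_one]
  have hωkm1 : ω ^ (2*(2^k - 1)) = ω ^ 2 := by
    rw [show 2*(2^k - 1) = 3 * (2*c) + 2 by omega]; exact hωpow (2*c) 2
  have hωne0 : ω ≠ 0 := by
    intro h; rw [h] at hω3; simp at hω3
  have hω2ne1 : ω^2 ≠ 1 := by
    intro h
    have : ω = 1 := by
      have := hω3
      calc ω = ω^3 / ω^2 := by rw [eq_div_iff (pow_ne_zero 2 hωne0)]; ring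
      _ = 1 / 1 := by rw [hω3, h]
      _ = 1 := by norm_num
    exact hωne this
  have hω2q : (ω^2) ^ (2^m) = ω^2 := by rw [← pow_mul, mul_comm 2 (2^m), pow_mul, hωq]
  have hωsum : ω^2 + ω = 1 := by linear_combination hω - htwo
  -- kernel lemma
  have key0 : ∀ (co : K), co ^ (2^m) = co → co^2 ≠ 1 → ∀ d : K, d ^ (2^m) = co * d → d = 0 := by
    intro co hcq hc2 d hd
    have h1 : d = co^2 * d := by
      conv_lhs => rw [← hqq d]
      rw [hd, mul_pow, hd, hcq]; ring
    have h0 : (co^2 - 1) * d = 0 := by linear_combination -h1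
    rcases mul_eq_zero.mp h0 with h | h
    · exact absurd (by linear_combination h) hc2
    · exact h
  -- coprimality and power injectivity
  have hgkm : Nat.Coprime k m := by
    set g := Nat.gcd k m with hgdef
    have hdk : (2:ℕ)^g - 1 ∣ 2^k - 1 := by
      obtain ⟨t, ht⟩ := Nat.gcd_dvd_left k m
      have := Nat.sub_dvd_pow_sub_pow (2^g) 1 t
      rw [one_pow, ← pow_mul, show g * t = _ from ht.symm] at this; exact this
    have hdm : (2:ℕ)^g - 1 ∣ 2^m - 1 := by
      obtain ⟨t, ht⟩ := Nat.gcd_dvd_right k m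
      have := Nat.sub_dvd_pow_sub_pow (2^g) 1 t
      rw [one_pow, ← pow_mul, show g * t = _ from ht.symm] at this; exact this
    have hdd : (2:ℕ)^g - 1 ∣ 1 := by
      have := Nat.dvd_gcd hdk hdm
      rwa [h1] at this
    have hgpos : 0 < g := Nat.gcd_pos_of_pos_left m hk
    have h2g : (2:ℕ)^1 ≤ 2^g := Nat.pow_le_pow_right (by norm_num) hgpos
    have h2g2 : (2:ℕ)^g - 1 = 1 := Nat.dvd_one.mp hdd
    have : g = 1 := by
      by_contra hgne
      have : 2 ≤ g := by omega
      have : (2:ℕ)^2 ≤ 2^g := Nat.pow_le_pow_right (by norm_num) this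
      omega
    exact this
  have hck2 : Nat.Coprime k 2 := by
    rcases Nat.coprime_or_dvd_of_prime Nat.prime_two k with h | h
    · exact h.symm
    · exact absurd h (by omega)
  have hcop : Nat.Coprime (2^k - 1) (2^(2*m) - 1) :=
    aux_mersenne_coprime k (2*m) (Nat.Coprime.mul_right hck2 hgkm)
  have hne2k : 2^k - 1 ≠ 0 := by
    have : (2:ℕ)^k ≥ 2 := by calc (2:ℕ) = 2^1 := rfl
                                  _ ≤ 2^k := Nat.pow_le_pow_right (by norm_num) hk
    omega
  have hpowinj : ∀ α β : K, α ^ (2^k - 1) = β ^ (2^k - 1) → α = β := by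
    intro α β hab
    by_cases hβ : β = 0
    · subst hβ
      rw [zero_pow hne2k] at hab
      exact pow_eq_zero_iff hne2k |>.mp hab
    by_cases hα : α = 0
    · subst hα
      rw [zero_pow hne2k] at hab
      exact ((pow_eq_zero_iff hne2k).mp hab.symm).symm
    set αu : Kˣ := Units.mk0 α hα with hαu
    set βu : Kˣ := Units.mk0 β hβ with hβu
    have hu : αu ^ (2^k - 1) = βu ^ (2^k - 1) := Units.ext (by simpa [hαu, hβu] using hab)
    have h1u : (αu * βu⁻¹) ^ (2^k - 1) = 1 := by
      rw [mul_pow, hu, ← mul_pow]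
      simp
    have hdvd1 : orderOf (αu * βu⁻¹) ∣ 2^k - 1 := orderOf_dvd_of_pow_eq_one h1u
    have hdvd2 : orderOf (αu * βu⁻¹) ∣ 2^(2*m) - 1 := by
      have := orderOf_dvd_card (x := αu * βu⁻¹)
      rwa [Fintype.card_units, hcard] at this
    have : orderOf (αu * βu⁻¹) ∣ 1 := hcop ▸ Nat.dvd_gcd hdvd1 hdvd2
    have hone : αu * βu⁻¹ = 1 := orderOf_eq_one_iff.mp (Nat.dvd_one.mp this)
    have : αu = βu := by
      have := congrArg (· * βu) hone
      simpa [mul_assoc] using this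
    have := congrArg (Units.val) this
    simpa [hαu, hβu] using this
  -- reindexing the sum
  have hq1 : 1 ≤ (2:ℕ)^m := Nat.one_le_two_pow
  have hqm0 : (2:ℕ)^m ≠ 0 := by positivity
  have hreindex : ∀ x : K,
      (∑ j ∈ (Finset.Icc 1 (2^k)).filter (fun j => j % 3 = 0 ∨ j % 3 = 2),
        x ^ (2^(k+m) - j*2^m + j - 1))
      = (∑ i ∈ (Finset.range (2^k)).filter (fun i => ¬ i % 3 = 1), (x^(2^m - 1))^i) * x^(2^k - 1) := by
    intro x
    rw [Finset.sum_mul]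
    refine Finset.sum_nbij' (fun j => 2^k - j) (fun i => 2^k - i) ?_ ?_ ?_ ?_ ?_
    · intro j hj
      simp only [Finset.mem_filter, Finset.mem_Icc, Finset.mem_range] at *
      omega
    · intro i hi
      simp only [Finset.mem_filter, Finset.mem_Icc, Finset.mem_range] at *
      omega
    · intro j hj; simp only [Finset.mem_filter, Finset.mem_Icc] at hj; omega
    · intro i hi; simp only [Finset.mem_filter, Finset.mem_range] at hi; omega
    · intro j hj
      simp only [Finset.mem_filter, Finset.mem_Icc] at hj
      have hE : 2^(k+m) - j*2^m + j - 1 = (2^m - 1)*(2^k - j) + (2^k - 1) := by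
        rw [pow_add]
        exact aux_exp (2^m) (2^k) j hq1 hj.1.1 hj.1.2
      rw [hE, pow_add, pow_mul]
  have hHid : ∀ z : K,
      (z^2 + z + 1) * (∑ i ∈ (Finset.range (2^k)).filter (fun i => ¬ i % 3 = 1), z^i)
        = z^(2^k) + z + 1 := by
    intro z
    rw [hc]
    exact aux_H htwo z c
  -- the key pointwise identity
  have hω4 : (ω^2)^2 = ω := by
    rw [← pow_mul, show (2*2 : ℕ) = 3*1+1 by norm_num, hωpow, pow_one]
  have hω2sq : (ω^2)^2 ≠ 1 := by rw [hω4]; exact hωne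
  have hkey : ∀ x : K,
      (∑ j ∈ (Finset.Icc 1 (2^k)).filter (fun j => j % 3 = 0 ∨ j % 3 = 2),
        x ^ (2^(k+m) - j*2^m + j - 1))
      = ω^2 * (x + ω * x^(2^m))^(2^k-1) + ((x + ω * x^(2^m))^(2^k-1))^(2^m) := by
    intro x
    rw [hreindex x]
    by_cases hx : x = 0
    · subst hx
      simp [zero_pow hne2k, zero_pow hqm0]
    · set B : K := x^(2^m) with hB
      set z : K := x^(2^m - 1) with hz
      set u : K := x + ω * B with hu
      set v : K := x + ω^2 * B with hv
      set X : K := x^(2^k) with hX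
      set Y : K := B^(2^k) with hY
      set Hx : K := ∑ i ∈ (Finset.range (2^k)).filter (fun i => ¬ i % 3 = 1), z^i with hHx
      have hzB : x * z = B := by
        rw [hz, hB, ← pow_succ']
        congr 1
        omega
      have hzB' : z * x = B := by rw [mul_comm]; exact hzB
      have e_uv : u * v = x^2 * (z^2 + z + 1) := by
        rw [show x^2 * (z^2+z+1) = (x*z)^2 + x*(x*z) + x^2 by ring, hzB, hu, hv]
        linear_combination (x*B)*hωsum + B^2*hω3
      have hXx : x^(2^k - 1) * x^2 = X * x := by
        rw [hX, ← pow_succ, ← pow_add]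
        congr 1
        omega
      have hzX : z^(2^k) * X = Y := by rw [hX, hY, ← mul_pow, hzB']
      have hprod : (Hx * x^(2^k-1)) * (u*v) = x*Y + X*B + X*x := by
        rw [e_uv]
        calc Hx * x^(2^k-1) * (x^2 * (z^2+z+1))
            = ((z^2+z+1) * Hx) * (x^(2^k-1) * x^2) := by ring
          _ = (z^(2^k) + z + 1) * (X * x) := by rw [hHx, hHid z, hXx]
          _ = x*Y + X*B + X*x := by linear_combination x * hzX + X * hzB'
      have hu2k : u^(2^k) = X + ω^2*Y := by
        rw [hu, hfrobk, mul_pow, hωk, hX, hY]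
      have hv2k : v^(2^k) = X + ω*Y := by
        rw [hv, hfrobk, mul_pow, hω2k, hX, hY]
      have hupow : u^(2^k-1) * u = u^(2^k) := by
        rw [← pow_succ]; congr 1; omega
      have hvpow : v^(2^k-1) * v = v^(2^k) := by
        rw [← pow_succ]; congr 1; omega
      have hrhsprod : (ω^2 * u^(2^k-1) + ω * v^(2^k-1)) * (u*v) = x*Y + X*B + X*x := by
        calc (ω^2 * u^(2^k-1) + ω * v^(2^k-1)) * (u*v)
            = ω^2 * (u^(2^k-1)*u) * v + ω * (v^(2^k-1)*v) * u := by ring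
          _ = ω^2 * (X + ω^2*Y) * v + ω * (X + ω*Y) * u := by rw [hupow, hvpow, hu2k, hv2k]
          _ = x*Y + X*B + X*x := by
              rw [hu, hv]
              linear_combination (X*x + X*B + x*Y)*hωsum + (ω*(X*B + x*Y) + (ω^3+2)*(Y*B))*hω3 + (Y*B)*htwo
      -- u and v are nonzero
      have hune : u ≠ 0 := by
        intro h0
        apply hx
        refine key0 (ω^2) hω2q hω2sq x ?_
        -- from u = 0 : x + ω*B = 0 so B = ω²x, i.e. x^(2^m) = ω² * x
        rw [hu] at h0
        rw [← hB]
        linear_combination ω^2 * h0 + (x^(2^m))*hω3 + (x^(2^m) - ω^2*x - x^(2^m)*ω^3)*htwo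
      have hvne : v ≠ 0 := by
        intro h0
        apply hx
        refine key0 ω hωq hω2ne1 x ?_
        rw [hv] at h0
        rw [← hB]
        linear_combination ω * h0 + (x^(2^m))*hω3 + (x^(2^m) - ω*x - x^(2^m)*ω^3)*htwo
      have huvne : u * v ≠ 0 := mul_ne_zero hune hvne
      have hcancel : Hx * x^(2^k-1) = ω^2 * u^(2^k-1) + ω * v^(2^k-1) :=
        mul_right_cancel₀ huvne (hprod.trans hrhsprod.symm)
      -- rewrite ω * v^(2^k-1) as (u^(2^k-1))^(2^m)
      have hBq : B^(2^m) = x := by rw [hB]; exact hqq x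
      have hvu : v = ω^2 * u^(2^m) := by
        rw [hu, hv, hfrob, mul_pow, hωq, hBq]
        linear_combination x*hω3 + (x - x*ω^3)*htwo
      have hvfin : ω * v^(2^k-1) = (u^(2^k-1))^(2^m) := by
        rw [hvu, mul_pow, ← pow_mul ω 2 (2^k-1), hωkm1, pow_right_comm, ← mul_assoc,
          ← pow_succ']
        rw [show (2+1 : ℕ) = 3 by norm_num, hω3, one_mul]
      rw [hcancel, hvfin, hu]
  -- injectivity
  have hinj : Function.Injective (fun x : K =>
      ∑ j ∈ (Finset.Icc 1 (2^k)).filter (fun j => j % 3 = 0 ∨ j % 3 = 2),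
        x ^ (2^(k+m) - j*2^m + j - 1)) := by
    intro x₁ x₂ hx
    dsimp only at hx
    rw [hkey x₁, hkey x₂] at hx
    have hd : ((x₁ + ω * x₁^(2^m))^(2^k-1) + (x₂ + ω * x₂^(2^m))^(2^k-1))^(2^m)
        = ω^2 * ((x₁ + ω * x₁^(2^m))^(2^k-1) + (x₂ + ω * x₂^(2^m))^(2^k-1)) := by
      rw [hfrob]
      linear_combination hx + (((x₂ + ω * x₂^(2^m))^(2^k-1))^(2^m) - ω^2*((x₁ + ω * x₁^(2^m))^(2^k-1)))*htwo
    have hd0 := key0 (ω^2) hω2q hω2sq _ hd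
    have hw : (x₁ + ω * x₁^(2^m))^(2^k-1) = (x₂ + ω * x₂^(2^m))^(2^k-1) := by
      linear_combination hd0 - ((x₂ + ω * x₂^(2^m))^(2^k-1))*htwo
    have hu12 : x₁ + ω * x₁^(2^m) = x₂ + ω * x₂^(2^m) := hpowinj _ _ hw
    have hdd : (x₁ + x₂)^(2^m) = ω^2 * (x₁ + x₂) := by
      rw [hfrob]
      linear_combination ω^2*hu12 + (x₂^(2^m) - x₁^(2^m))*hω3 + (x₂^(2^m) - ω^2*x₁)*htwo
    have hdd0 := key0 (ω^2) hω2q hω2sq _ hdd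
    linear_combination hdd0 - x₂*htwo
  exact Finite.injective_iff_bijective.mp hinj
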